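/- Let λ₁ ≥ λ₂ ≥ ... ≥ λ_N > 0 and ε > 0 with C/N^γ ≥ ε and λᵢ ≤ C/i^γ. For X the random variable max{ln(Y/ε), 0} where Y is uniform on {λ₁,...,λ_N}, one has Var[X] ≤ ln²(C/(εN^γ)) + 2γ·ln(C/(εN^γ)) + 2γ². -/

import Mathlib

open Real intervalIntegral

lemma log_int1 (n : ℕ) (hn : 1 ≤ n) :
    ∫ x in (1:ℝ)..(n:ℝ), (Real.log n - Real.log x) = (n:ℝ) - Real.log n - 1 := by
  set c := Real.log n
  have h1n : (1:ℝ) ≤ n := by exact_mod_cast hn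
  have hderiv : ∀ x ∈ Set.uIcc (1:ℝ) (n:ℝ),
      HasDerivAt (fun x : ℝ => x * (c - Real.log x) + x) (c - Real.log x) x := by
    intro x hx
    rw [Set.uIcc_of_le h1n] at hx
    have hx0 : x ≠ 0 := by nlinarith [hx.1]
    have h := (((hasDerivAt_id x).mul ((hasDerivAt_const x c).sub
      (Real.hasDerivAt_log hx0)))).add (hasDerivAt_id x)
    refine h.congr_deriv ?_
    simp only [id, Pi.sub_apply]
    field_simp
    ring
  have hint : IntervalIntegrable (fun x => c - Real.log x) MeasureTheory.volume 1 n := by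
    apply ContinuousOn.intervalIntegrable
    apply continuousOn_const.sub
    apply Real.continuousOn_log.mono
    intro x hx
    rw [Set.uIcc_of_le h1n] at hx
    simp only [Set.mem_compl_iff, Set.mem_singleton_iff]
    nlinarith [hx.1]
  rw [intervalIntegral.integral_eq_sub_of_hasDerivAt hderiv hint]
  simp [Real.log_one, c]
  ring

lemma log_int2 (n : ℕ) (hn : 1 ≤ n) :
    ∫ x in (1:ℝ)..(n:ℝ), (Real.log n - Real.log x)^2
      = 2*(n:ℝ) - (Real.log n)^2 - 2*Real.log n - 2 := by
  set c := Real.log n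
  have h1n : (1:ℝ) ≤ n := by exact_mod_cast hn
  have hderiv : ∀ x ∈ Set.uIcc (1:ℝ) (n:ℝ),
      HasDerivAt (fun x : ℝ => x * (c - Real.log x)^2 + 2*(x*(c - Real.log x)) + 2*x)
        ((c - Real.log x)^2) x := by
    intro x hx
    rw [Set.uIcc_of_le h1n] at hx
    have hx0 : x ≠ 0 := by nlinarith [hx.1]
    have h := (((hasDerivAt_id x).mul (((hasDerivAt_const x c).sub
        (Real.hasDerivAt_log hx0)).pow 2)).add
      (((hasDerivAt_id x).mul ((hasDerivAt_const x c).sub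
        (Real.hasDerivAt_log hx0))).const_mul 2)).add ((hasDerivAt_id x).const_mul 2)
    refine h.congr_deriv ?_
    simp only [id, Pi.sub_apply, Pi.pow_apply]
    field_simp
    ring
  have hint : IntervalIntegrable (fun x => (c - Real.log x)^2) MeasureTheory.volume 1 n := by
    apply ContinuousOn.intervalIntegrable
    apply ContinuousOn.pow
    apply continuousOn_const.sub
    apply Real.continuousOn_log.mono
    intro x hx
    rw [Set.uIcc_of_le h1n] at hx
    simp only [Set.mem_compl_iff, Set.mem_singleton_iff]
    nlinarith [hx.1]
  rw [intervalIntegral.integral_eq_sub_of_hasDerivAt hderiv hint]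
  simp [Real.log_one, c]
  ring

lemma sum_log1 (n : ℕ) (hn : 1 ≤ n) :
    ∑ k ∈ Finset.range n, (Real.log n - Real.log ((k:ℝ)+1)) ≤ (n:ℝ) := by
  obtain ⟨m, rfl⟩ := Nat.exists_eq_add_of_le hn
  rw [Nat.add_comm 1 m] at hn ⊢
  rw [Finset.sum_range_succ']
  set c := Real.log (m+1 : ℕ)
  have hc : 0 ≤ c := Real.log_natCast_nonneg _
  have hanti : AntitoneOn (fun x => c - Real.log x) (Set.Icc (1:ℝ) (1 + (m:ℕ))) := by
    intro x hx y hy hxy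
    have : Real.log x ≤ Real.log y := Real.log_le_log (by linarith [hx.1]) hxy
    simp only
    linarith
  have key := AntitoneOn.sum_le_integral (x₀ := (1:ℝ)) (a := m) (f := fun x => c - Real.log x) hanti
  have hsum : ∑ i ∈ Finset.range m, (Real.log (m+1:ℕ) - Real.log (((i+1:ℕ):ℝ)+1))
      = ∑ i ∈ Finset.range m, (fun x => c - Real.log x) (1 + ((i + 1 : ℕ) : ℝ)) := by
    apply Finset.sum_congr rfl
    intro i _
    simp only [c]
    push_cast
    ring_nf
  have hint1 : ∫ x in (1:ℝ)..(1 + (m:ℕ):ℝ), (c - Real.log x)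
      = ((m+1:ℕ):ℝ) - Real.log (m+1:ℕ) - 1 := by
    have := log_int1 (m+1) hn
    convert this using 2 <;> push_cast <;> ring
  rw [hsum]
  simp only [Nat.cast_zero, zero_add, Real.log_one, sub_zero]
  calc (∑ i ∈ Finset.range m, (fun x => c - Real.log x) (1 + ((i + 1 : ℕ) : ℝ)))
        + Real.log (m+1:ℕ)
      ≤ (∫ x in (1:ℝ)..(1 + (m:ℕ):ℝ), (c - Real.log x)) + Real.log (m+1:ℕ) := by
        linarith [key]
    _ ≤ ((m+1:ℕ):ℝ) := by rw [hint1]; push_cast; linarith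

lemma sum_log2 (n : ℕ) (hn : 1 ≤ n) :
    ∑ k ∈ Finset.range n, (Real.log n - Real.log ((k:ℝ)+1))^2 ≤ 2*(n:ℝ) := by
  obtain ⟨m, rfl⟩ := Nat.exists_eq_add_of_le hn
  rw [Nat.add_comm 1 m] at hn ⊢
  rw [Finset.sum_range_succ']
  set c := Real.log (m+1 : ℕ)
  have hc : 0 ≤ c := Real.log_natCast_nonneg _
  have hanti : AntitoneOn (fun x => (c - Real.log x)^2) (Set.Icc (1:ℝ) (1 + (m:ℕ))) := by
    intro x hx y hy hxy
    have h1 : Real.log x ≤ Real.log y := Real.log_le_log (by linarith [hx.1]) hxy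
    have h2 : Real.log y ≤ c := by
      have : Real.log y ≤ Real.log ((m+1:ℕ):ℝ) :=
        Real.log_le_log (by linarith [hx.1]) (by push_cast; linarith [hy.2])
      simpa [c] using this
    simp only
    nlinarith
  have key := AntitoneOn.sum_le_integral (x₀ := (1:ℝ)) (a := m)
    (f := fun x => (c - Real.log x)^2) hanti
  have hsum : ∑ i ∈ Finset.range m, (Real.log (m+1:ℕ) - Real.log (((i+1:ℕ):ℝ)+1))^2
      = ∑ i ∈ Finset.range m, (fun x => (c - Real.log x)^2) (1 + ((i + 1 : ℕ) : ℝ)) := by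
    apply Finset.sum_congr rfl
    intro i _
    simp only [c]
    push_cast
    ring_nf
  have hint1 : ∫ x in (1:ℝ)..(1 + (m:ℕ):ℝ), (c - Real.log x)^2
      = 2*((m+1:ℕ):ℝ) - c^2 - 2*c - 2 := by
    have := log_int2 (m+1) hn
    convert this using 2 <;> push_cast <;> ring
  rw [hsum]
  simp only [Nat.cast_zero, zero_add, Real.log_one, sub_zero]
  calc (∑ i ∈ Finset.range m, (fun x => (c - Real.log x)^2) (1 + ((i + 1 : ℕ) : ℝ))) + c^2
      ≤ (∫ x in (1:ℝ)..(1 + (m:ℕ):ℝ), (c - Real.log x)^2) + c^2 := by linarith [key]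
    _ ≤ 2*((m+1:ℕ):ℝ) := by rw [hint1]; linarith

theorem variance_bound (N : ℕ) (hN : 0 < N) (C γ ε : ℝ)
    (hC : 0 < C) (hγ : 0 < γ) (hε : 0 < ε)
    (l : Fin N → ℝ) (hpos : ∀ i, 0 < l i)
    (hdec : ∀ i j : Fin N, i ≤ j → l j ≤ l i)
    (hl : ∀ i : Fin N, l i ≤ C / ((i : ℝ) + 1) ^ γ)
    (hεN : ε ≤ C / (N : ℝ) ^ γ) :
    (1 / (N : ℝ)) * ∑ i, (max (Real.log (l i / ε)) 0) ^ 2 -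
        ((1 / (N : ℝ)) * ∑ i, max (Real.log (l i / ε)) 0) ^ 2 ≤
      (Real.log (C / (ε * (N : ℝ) ^ γ))) ^ 2 +
        2 * γ * Real.log (C / (ε * (N : ℝ) ^ γ)) + 2 * γ ^ 2 := by
  have hNR : (0:ℝ) < N := by exact_mod_cast hN
  have hNγ : (0:ℝ) < (N : ℝ) ^ γ := Real.rpow_pos_of_pos hNR γ
  set L := Real.log (C / (ε * (N : ℝ) ^ γ)) with hLdef
  have hεNγ : ε * (N:ℝ)^γ ≤ C := (le_div_iff₀ hNγ).mp hεN
  have hL0 : 0 ≤ L := Real.log_nonneg ((one_le_div (by positivity)).mpr hεNγ)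
  have hLexp : L = Real.log C - Real.log ε - γ * Real.log N := by
    rw [hLdef, Real.log_div hC.ne' (by positivity), Real.log_mul hε.ne' (by positivity),
      Real.log_rpow hNR]
    ring
  set s : ℕ → ℝ := fun k => Real.log N - Real.log ((k:ℝ)+1) with hsdef
  have hs0 : ∀ i : Fin N, 0 ≤ s i := by
    intro i
    have hi : (i:ℝ) + 1 ≤ (N:ℝ) := by
      have := i.2
      exact_mod_cast Nat.succ_le_of_lt this
    have := Real.log_le_log (by positivity) hi
    simp only [hsdef]
    linarith
  have hbound : ∀ i : Fin N, max (Real.log (l i / ε)) 0 ≤ L + γ * s (i:ℕ) := by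
    intro i
    have hip : (0:ℝ) < (i:ℝ) + 1 := by positivity
    apply max_le _ (by nlinarith [hs0 i])
    have h1 : Real.log (l i / ε) ≤ Real.log ((C / ((i:ℝ)+1)^γ) / ε) :=
      Real.log_le_log (div_pos (hpos i) hε) (by gcongr; exact hl i)
    have h2 : Real.log ((C / ((i:ℝ)+1)^γ) / ε)
        = Real.log C - γ * Real.log ((i:ℝ)+1) - Real.log ε := by
      rw [Real.log_div (by positivity) hε.ne', Real.log_div hC.ne' (by positivity),
        Real.log_rpow hip]
    simp only [hsdef]
    linarith
  have hsq : ∀ i : Fin N, (max (Real.log (l i / ε)) 0)^2 ≤ (L + γ * s (i:ℕ))^2 := by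
    intro i
    exact pow_le_pow_left₀ (le_max_right _ 0) (hbound i) 2
  have hS1 := sum_log1 N hN
  have hS2 := sum_log2 N hN
  have hsum2 : ∑ i, (max (Real.log (l i / ε)) 0)^2
      ≤ (N:ℝ)*L^2 + 2*γ*L*N + γ^2*(2*N) := by
    calc ∑ i, (max (Real.log (l i / ε)) 0)^2
        ≤ ∑ i : Fin N, (L + γ * s (i:ℕ))^2 := Finset.sum_le_sum (fun i _ => hsq i)
      _ = ∑ k ∈ Finset.range N, (L + γ * s k)^2 :=
          Fin.sum_univ_eq_sum_range (fun k => (L + γ * s k)^2) N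
      _ = (N:ℝ)*L^2 + 2*γ*L*(∑ k ∈ Finset.range N, s k)
            + γ^2*(∑ k ∈ Finset.range N, (s k)^2) := by
          have hxp : ∀ k:ℕ, (L + γ * s k)^2 = L^2 + 2*γ*L*(s k) + γ^2*(s k)^2 :=
            fun k => by ring
          simp_rw [hxp]
          rw [Finset.sum_add_distrib, Finset.sum_add_distrib, ← Finset.mul_sum,
            ← Finset.mul_sum, Finset.sum_const, nsmul_eq_mul, Finset.card_range]
      _ ≤ (N:ℝ)*L^2 + 2*γ*L*N + γ^2*(2*N) := by
          simp only [hsdef] at *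
          nlinarith [hS1, hS2, mul_nonneg hγ.le hL0]
  have h1 : (1 / (N : ℝ)) * ∑ i, (max (Real.log (l i / ε)) 0)^2
      ≤ L^2 + 2*γ*L + 2*γ^2 := by
    have h := mul_le_mul_of_nonneg_left hsum2 (by positivity : (0:ℝ) ≤ 1/(N:ℝ))
    calc (1 / (N : ℝ)) * ∑ i, (max (Real.log (l i / ε)) 0)^2
        ≤ (1/(N:ℝ)) * ((N:ℝ)*L^2 + 2*γ*L*N + γ^2*(2*N)) := h
      _ = L^2 + 2*γ*L + 2*γ^2 := by field_simp
  have hsq2 : (0:ℝ) ≤ ((1 / (N : ℝ)) * ∑ i, max (Real.log (l i / ε)) 0)^2 := sq_nonneg _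
  linarith
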